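/- The universal enveloping bigraft algebra functor U_BG, sending an L-algebra A to T̄(A) with concatenation and the extended graft operations, is left adjoint to the forgetful functor from bigraft algebras to L-algebras (which remembers only ≻ and ≺): for every L-algebra A, bigraft algebra B, and L-algebra morphism f : A → B, there exists a unique bigraft algebra morphism f̃ : U_BG(A) → B extending f. -/

import Mathlib

open TensorAlgebra

/-- The augmentation ideal `T̄(A) = ⊕_{n≥1} A^{⊗n}` of the tensor algebra: the span of
the nonempty products `a₁⋯a_p` of elements of `A`. -/
def augIdeal (K : Type*) (A : Type*) [Field K] [AddCommGroup A] [Module K A] :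
    Submodule K (TensorAlgebra K A) :=
  Submodule.span K
    {x | ∃ l : List A, l ≠ [] ∧ x = (l.map (TensorAlgebra.ι K)).prod}

/-- the universal enveloping bigraft algebra `U_BG(A) = T̄(A)` of an
L-algebra `A` (with concatenation and the extended graft operations
`(a₁⋯a_p) ≻ (b₁⋯b_q) = (a₁≻(⋯(a_p≻b₁)⋯))·b₂⋯b_q`,
`(a₁⋯a_p) ≺ (b₁⋯b_q) = a₁⋯a_{p−1}·((⋯(a_p≺b₁)⋯)≺b_q)`)
is left adjoint to the forgetful functor from bigraft algebras to L-algebras: every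
L-algebra morphism `f : A → B` into a bigraft algebra `B` extends uniquely to a
bigraft algebra morphism `f̃ : U_BG(A) → B`. -/
theorem U_BG_left_adjoint
    {K A : Type*} [Field K] [AddCommGroup A] [Module K A]
    -- the L-algebra A
    (succA precA : A →ₗ[K] A →ₗ[K] A)
    (hL : ∀ x y z : A, precA (succA x y) z = succA x (precA y z))
    -- the operations of U_BG(A) on T̄(A)
    (succT precT : TensorAlgebra K A →ₗ[K] TensorAlgebra K A →ₗ[K] TensorAlgebra K A)
    (hs1 : ∀ a b : A,
      succT (TensorAlgebra.ι K a) (TensorAlgebra.ι K b) = TensorAlgebra.ι K (succA a b))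
    (hs2 : ∀ (a b : A) (y : TensorAlgebra K A), y ∈ augIdeal K A →
      succT (TensorAlgebra.ι K a) (TensorAlgebra.ι K b * y)
        = TensorAlgebra.ι K (succA a b) * y)
    (hs3 : ∀ (a : A) (x y : TensorAlgebra K A), x ∈ augIdeal K A → y ∈ augIdeal K A →
      succT (TensorAlgebra.ι K a * x) y = succT (TensorAlgebra.ι K a) (succT x y))
    (hp1 : ∀ a b : A,
      precT (TensorAlgebra.ι K a) (TensorAlgebra.ι K b) = TensorAlgebra.ι K (precA a b))
    (hp2 : ∀ (a b : A) (x : TensorAlgebra K A), x ∈ augIdeal K A →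
      precT (x * TensorAlgebra.ι K a) (TensorAlgebra.ι K b)
        = x * TensorAlgebra.ι K (precA a b))
    (hp3 : ∀ (b : A) (x y : TensorAlgebra K A), x ∈ augIdeal K A → y ∈ augIdeal K A →
      precT x (y * TensorAlgebra.ι K b) = precT (precT x y) (TensorAlgebra.ι K b))
    -- a bigraft algebra B
    {B : Type*} [AddCommGroup B] [Module K B]
    (starB succB precB : B →ₗ[K] B →ₗ[K] B)
    (hB1 : ∀ x y z : B, starB (starB x y) z = starB x (starB y z))
    (hB2 : ∀ x y z : B, succB (starB x y) z = succB x (succB y z))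
    (hB3 : ∀ x y z : B, starB (succB x y) z = succB x (starB y z))
    (hB4 : ∀ x y z : B, precB (precB x y) z = precB x (starB y z))
    (hB5 : ∀ x y z : B, precB (starB x y) z = starB x (precB y z))
    (hB6 : ∀ x y z : B, precB (succB x y) z = succB x (precB y z))
    -- an L-algebra morphism f : A → B
    (f : A →ₗ[K] B)
    (hf_succ : ∀ a a' : A, f (succA a a') = succB (f a) (f a'))
    (hf_prec : ∀ a a' : A, f (precA a a') = precB (f a) (f a')) :
    -- unique extension to a bigraft morphism on U_BG(A) = T̄(A)
    ∃! φ : ↥(augIdeal K A) →ₗ[K] B,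
      (∀ (x y : TensorAlgebra K A) (hx : x ∈ augIdeal K A) (hy : y ∈ augIdeal K A)
          (hxy : x * y ∈ augIdeal K A),
          φ ⟨x * y, hxy⟩ = starB (φ ⟨x, hx⟩) (φ ⟨y, hy⟩)) ∧
      (∀ (x y : TensorAlgebra K A) (hx : x ∈ augIdeal K A) (hy : y ∈ augIdeal K A)
          (hxy : succT x y ∈ augIdeal K A),
          φ ⟨succT x y, hxy⟩ = succB (φ ⟨x, hx⟩) (φ ⟨y, hy⟩)) ∧
      (∀ (x y : TensorAlgebra K A) (hx : x ∈ augIdeal K A) (hy : y ∈ augIdeal K A)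
          (hxy : precT x y ∈ augIdeal K A),
          φ ⟨precT x y, hxy⟩ = precB (φ ⟨x, hx⟩) (φ ⟨y, hy⟩)) ∧
      (∀ (a : A) (h : TensorAlgebra.ι K a ∈ augIdeal K A),
          φ ⟨TensorAlgebra.ι K a, h⟩ = f a) := by
  classical
  -- make `B` a non-unital ring via `starB`
  letI : NonUnitalNonAssocRing B :=
    { (inferInstance : AddCommGroup B) with
      mul := fun x y => starB x y
      left_distrib := fun x y z => map_add (starB x) y z
      right_distrib := fun x y z => by
        show starB (x + y) z = starB x z + starB y z
        rw [map_add]; rfl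
      zero_mul := fun x => by show starB 0 x = 0; rw [map_zero]; rfl
      mul_zero := fun x => by show starB x 0 = 0; exact map_zero _ }
  letI : NonUnitalRing B := { (inferInstance : NonUnitalNonAssocRing B) with mul_assoc := hB1 }
  have hmulB : ∀ x y : B, x * y = starB x y := fun _ _ => rfl
  letI : IsScalarTower K B B :=
    ⟨fun k x y => by
      show starB (k • x) y = k • starB x y
      rw [map_smul]; rfl⟩
  letI : SMulCommClass K B B :=
    ⟨fun k x y => by
      show k • starB x y = starB x (k • y)
      rw [map_smul]⟩
  -- the lift into the unitization
  set g : A →ₗ[K] Unitization K B :=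
    { toFun := fun a => (f a : Unitization K B)
      map_add' := fun a b => by simp [Unitization.inr_add]
      map_smul' := fun k a => by simp [Unitization.inr_smul] } with hg
  set F : TensorAlgebra K A →ₐ[K] Unitization K B := TensorAlgebra.lift K g with hF
  set Φ : TensorAlgebra K A →ₗ[K] B :=
    (Unitization.sndHom K K B).comp F.toLinearMap with hΦ
  have hΦapp : ∀ x : TensorAlgebra K A, Φ x = (F x).snd := fun _ => rfl
  have hFι : ∀ a : A, F (TensorAlgebra.ι K a) = (f a : Unitization K B) := fun a => by
    rw [hF, TensorAlgebra.lift_ι_apply]; rfl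
  have hΦι : ∀ a : A, Φ (TensorAlgebra.ι K a) = f a := fun a => by
    rw [hΦapp, hFι, Unitization.snd_inr]
  have hιmem : ∀ a : A, TensorAlgebra.ι K a ∈ augIdeal K A := fun a =>
    Submodule.subset_span ⟨[a], by simp, by simp⟩
  -- fst of F vanishes on the augmentation ideal
  have hfst : ∀ x ∈ augIdeal K A, (F x).fst = 0 := by
    intro x hx
    induction hx using Submodule.span_induction with
    | mem x hx =>
      obtain ⟨l, hl, rfl⟩ := hx
      cases l with
      | nil => exact absurd rfl hl
      | cons a t =>
        rw [List.map_cons, List.prod_cons, map_mul, Unitization.fst_mul, hFι,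
          Unitization.fst_inr, zero_mul]
    | zero => simp
    | add x y _ _ ihx ihy => rw [map_add, Unitization.fst_add, ihx, ihy, add_zero]
    | smul k x _ ih => rw [map_smul, Unitization.fst_smul, ih, smul_zero]
  -- Φ is multiplicative (w.r.t. starB) on the augmentation ideal
  have hΦmul : ∀ x ∈ augIdeal K A, ∀ y ∈ augIdeal K A, Φ (x * y) = starB (Φ x) (Φ y) := by
    intro x hx y hy
    rw [hΦapp, hΦapp, hΦapp, map_mul, Unitization.snd_mul, hfst x hx, hfst y hy,
      zero_smul, zero_smul, zero_add, zero_add, hmulB]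
  -- augIdeal is closed under multiplication
  have hmulmem : ∀ x ∈ augIdeal K A, ∀ y ∈ augIdeal K A, x * y ∈ augIdeal K A := by
    intro x hx
    induction hx using Submodule.span_induction with
    | mem x hx =>
      intro y hy
      induction hy using Submodule.span_induction with
      | mem y hy =>
        obtain ⟨l, hl, rfl⟩ := hx
        obtain ⟨m, hm, rfl⟩ := hy
        exact Submodule.subset_span
          ⟨l ++ m, by simp [hl], by simp [List.prod_append]⟩
      | zero => rw [mul_zero]; exact zero_mem _
      | add y z _ _ ihy ihz => rw [mul_add]; exact add_mem ihy ihz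
      | smul k y _ ih => rw [mul_smul_comm]; exact Submodule.smul_mem _ _ ih
    | zero => intro y hy; rw [zero_mul]; exact zero_mem _
    | add x z _ _ ihx ihz => intro y hy; rw [add_mul]; exact add_mem (ihx y hy) (ihz y hy)
    | smul k x _ ih => intro y hy; rw [smul_mul_assoc]; exact Submodule.smul_mem _ _ (ih y hy)
  -- succ with a single generator on the left
  have hS1 : ∀ (a : A), ∀ y ∈ augIdeal K A,
      succT (TensorAlgebra.ι K a) y ∈ augIdeal K A ∧
        Φ (succT (TensorAlgebra.ι K a) y) = succB (f a) (Φ y) := by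
    intro a y hy
    induction hy using Submodule.span_induction with
    | mem y hy =>
      obtain ⟨l, hl, rfl⟩ := hy
      cases l with
      | nil => exact absurd rfl hl
      | cons b t =>
        cases t with
        | nil =>
          simp only [List.map_cons, List.map_nil, List.prod_cons, List.prod_nil, mul_one]
          rw [hs1]
          exact ⟨hιmem _, by rw [hΦι, hΦι, hf_succ]⟩
        | cons c t' =>
          have hP : ((c :: t').map (TensorAlgebra.ι K)).prod ∈ augIdeal K A :=
            Submodule.subset_span ⟨c :: t', by simp, rfl⟩
          have heq : ((b :: c :: t').map (TensorAlgebra.ι K)).prod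
              = TensorAlgebra.ι K b * ((c :: t').map (TensorAlgebra.ι K)).prod := by
            rw [List.map_cons, List.prod_cons]
          rw [heq, hs2 a b _ hP]
          refine ⟨hmulmem _ (hιmem _) _ hP, ?_⟩
          rw [hΦmul _ (hιmem _) _ hP, hΦmul _ (hιmem _) _ hP, hΦι, hΦι, hf_succ, hB3]
    | zero =>
      refine ⟨by rw [map_zero]; exact zero_mem _, ?_⟩
      rw [map_zero, map_zero, map_zero]
    | add y z hy hz ihy ihz =>
      refine ⟨by rw [map_add]; exact add_mem ihy.1 ihz.1, ?_⟩
      simp only [map_add, ihy.2, ihz.2]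
    | smul k y hy ih =>
      refine ⟨by rw [map_smul]; exact Submodule.smul_mem _ _ ih.1, ?_⟩
      simp only [map_smul, ih.2]
  -- succ in general
  have keyS : ∀ l : List A, l ≠ [] → ∀ y ∈ augIdeal K A,
      succT ((l.map (TensorAlgebra.ι K)).prod) y ∈ augIdeal K A ∧
        Φ (succT ((l.map (TensorAlgebra.ι K)).prod) y)
          = succB (Φ ((l.map (TensorAlgebra.ι K)).prod)) (Φ y) := by
    intro l
    induction l with
    | nil => intro h; exact absurd rfl h
    | cons a t ih =>
      intro _ y hy
      cases t with
      | nil =>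
        simp only [List.map_cons, List.map_nil, List.prod_cons, List.prod_nil, mul_one]
        obtain ⟨h1, h2⟩ := hS1 a y hy
        exact ⟨h1, by rw [h2, hΦι]⟩
      | cons b t' =>
        have htne : (b :: t') ≠ [] := by simp
        have hPt : ((b :: t').map (TensorAlgebra.ι K)).prod ∈ augIdeal K A :=
          Submodule.subset_span ⟨b :: t', htne, rfl⟩
        have heq : (((a :: b :: t')).map (TensorAlgebra.ι K)).prod
            = TensorAlgebra.ι K a * ((b :: t').map (TensorAlgebra.ι K)).prod := by
          simp [List.prod_cons]
        rw [heq, hs3 a _ y hPt hy]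
        obtain ⟨hm, he⟩ := ih htne y hy
        obtain ⟨hm2, he2⟩ := hS1 a _ hm
        refine ⟨hm2, ?_⟩
        rw [he2, he, hΦmul _ (hιmem a) _ hPt, hΦι, hB2]
  have hS : ∀ x ∈ augIdeal K A, ∀ y ∈ augIdeal K A,
      succT x y ∈ augIdeal K A ∧ Φ (succT x y) = succB (Φ x) (Φ y) := by
    intro x hx
    induction hx using Submodule.span_induction with
    | mem x hx =>
      obtain ⟨l, hl, rfl⟩ := hx
      exact keyS l hl
    | zero =>
      intro y hy
      refine ⟨by rw [map_zero, LinearMap.zero_apply]; exact zero_mem _, ?_⟩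
      rw [map_zero, LinearMap.zero_apply, map_zero, map_zero, LinearMap.zero_apply]
    | add x z _ _ ihx ihz =>
      intro y hy
      obtain ⟨h1, h2⟩ := ihx y hy
      obtain ⟨h3, h4⟩ := ihz y hy
      refine ⟨by rw [map_add, LinearMap.add_apply]; exact add_mem h1 h3, ?_⟩
      simp only [map_add, LinearMap.add_apply, h2, h4]
    | smul k x _ ih =>
      intro y hy
      obtain ⟨h1, h2⟩ := ih y hy
      refine ⟨by rw [map_smul, LinearMap.smul_apply]; exact Submodule.smul_mem _ _ h1, ?_⟩
      simp only [map_smul, LinearMap.smul_apply, h2]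
  -- prec with a single generator on the right
  have hP1 : ∀ (b : A), ∀ x ∈ augIdeal K A,
      precT x (TensorAlgebra.ι K b) ∈ augIdeal K A ∧
        Φ (precT x (TensorAlgebra.ι K b)) = precB (Φ x) (f b) := by
    intro b x hx
    induction hx using Submodule.span_induction with
    | mem x hx =>
      obtain ⟨l, hl, rfl⟩ := hx
      induction l using List.reverseRecOn with
      | nil => exact absurd rfl hl
      | append_singleton t a ih =>
        cases t with
        | nil =>
          simp only [List.nil_append, List.map_cons, List.map_nil, List.prod_cons,
            List.prod_nil, mul_one]
          rw [hp1]
          exact ⟨hιmem _, by rw [hΦι, hΦι, hf_prec]⟩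
        | cons c t' =>
          have hPt : ((c :: t').map (TensorAlgebra.ι K)).prod ∈ augIdeal K A :=
            Submodule.subset_span ⟨c :: t', by simp, rfl⟩
          have heq : (((c :: t') ++ [a]).map (TensorAlgebra.ι K)).prod
              = ((c :: t').map (TensorAlgebra.ι K)).prod * TensorAlgebra.ι K a := by
            rw [List.map_append, List.prod_append]; simp
          rw [heq, hp2 a b _ hPt]
          refine ⟨hmulmem _ hPt _ (hιmem _), ?_⟩
          rw [hΦmul _ hPt _ (hιmem _), hΦmul _ hPt _ (hιmem _), hΦι, hΦι, hf_prec, hB5]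
    | zero =>
      refine ⟨by rw [map_zero, LinearMap.zero_apply]; exact zero_mem _, ?_⟩
      rw [map_zero, LinearMap.zero_apply, map_zero, map_zero, LinearMap.zero_apply]
    | add x z _ _ ihx ihz =>
      refine ⟨by rw [map_add, LinearMap.add_apply]; exact add_mem ihx.1 ihz.1, ?_⟩
      simp only [map_add, LinearMap.add_apply, ihx.2, ihz.2]
    | smul k x _ ih =>
      refine ⟨by rw [map_smul, LinearMap.smul_apply]; exact Submodule.smul_mem _ _ ih.1, ?_⟩
      simp only [map_smul, LinearMap.smul_apply, ih.2]
  -- prec in general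
  have keyP : ∀ m : List A, m ≠ [] → ∀ x ∈ augIdeal K A,
      precT x ((m.map (TensorAlgebra.ι K)).prod) ∈ augIdeal K A ∧
        Φ (precT x ((m.map (TensorAlgebra.ι K)).prod))
          = precB (Φ x) (Φ ((m.map (TensorAlgebra.ι K)).prod)) := by
    intro m
    induction m using List.reverseRecOn with
    | nil => intro h; exact absurd rfl h
    | append_singleton t b ih =>
      intro _ x hx
      cases t with
      | nil =>
        simp only [List.nil_append, List.map_cons, List.map_nil, List.prod_cons,
          List.prod_nil, mul_one]
        obtain ⟨h1, h2⟩ := hP1 b x hx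
        exact ⟨h1, by rw [h2, hΦι]⟩
      | cons c t' =>
        have htne : (c :: t') ≠ [] := by simp
        have hPt : ((c :: t').map (TensorAlgebra.ι K)).prod ∈ augIdeal K A :=
          Submodule.subset_span ⟨c :: t', htne, rfl⟩
        have heq : (((c :: t') ++ [b]).map (TensorAlgebra.ι K)).prod
            = ((c :: t').map (TensorAlgebra.ι K)).prod * TensorAlgebra.ι K b := by
          rw [List.map_append, List.prod_append]; simp
        rw [heq, hp3 b x _ hx hPt]
        obtain ⟨hm, he⟩ := ih htne x hx
        obtain ⟨hm2, he2⟩ := hP1 b _ hm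
        refine ⟨hm2, ?_⟩
        rw [he2, he, hΦmul _ hPt _ (hιmem b), hΦι, hB4]
  have hP : ∀ x ∈ augIdeal K A, ∀ y ∈ augIdeal K A,
      precT x y ∈ augIdeal K A ∧ Φ (precT x y) = precB (Φ x) (Φ y) := by
    intro x hx y hy
    induction hy using Submodule.span_induction with
    | mem y hy =>
      obtain ⟨m, hm, rfl⟩ := hy
      exact keyP m hm x hx
    | zero =>
      refine ⟨by rw [map_zero]; exact zero_mem _, ?_⟩
      rw [map_zero, map_zero, map_zero]
    | add y z _ _ ihy ihz =>
      refine ⟨by rw [map_add]; exact add_mem ihy.1 ihz.1, ?_⟩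
      simp only [map_add, ihy.2, ihz.2]
    | smul k y _ ih =>
      refine ⟨by rw [map_smul]; exact Submodule.smul_mem _ _ ih.1, ?_⟩
      simp only [map_smul, ih.2]
  -- the extension
  refine ⟨Φ.comp (augIdeal K A).subtype, ⟨?_, ?_, ?_, ?_⟩, ?_⟩
  · intro x y hx hy hxy
    exact hΦmul x hx y hy
  · intro x y hx hy hxy
    exact (hS x hx y hy).2
  · intro x y hx hy hxy
    exact (hP x hx y hy).2
  · intro a h
    exact hΦι a
  -- uniqueness
  · intro φ' ⟨c1, c2, c3, c4⟩
    have val_congr : ∀ {x y : TensorAlgebra K A} (h : x ∈ augIdeal K A)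
        (h' : y ∈ augIdeal K A), x = y → φ' ⟨x, h⟩ = φ' ⟨y, h'⟩ := by
      intro x y h h' e
      exact congrArg φ' (Subtype.ext e)
    have keyU : ∀ l : List A, l ≠ [] → ∀ h : (l.map (TensorAlgebra.ι K)).prod ∈ augIdeal K A,
        φ' ⟨(l.map (TensorAlgebra.ι K)).prod, h⟩ = Φ ((l.map (TensorAlgebra.ι K)).prod) := by
      intro l
      induction l with
      | nil => intro h; exact absurd rfl h
      | cons a t ih =>
        intro _ h
        cases t with
        | nil =>
          have e : (([a]).map (TensorAlgebra.ι K)).prod = TensorAlgebra.ι K a := by simp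
          rw [val_congr h (hιmem a) e, c4 a (hιmem a), e, hΦι]
        | cons b t' =>
          have htne : (b :: t') ≠ [] := by simp
          have hPt : ((b :: t').map (TensorAlgebra.ι K)).prod ∈ augIdeal K A :=
            Submodule.subset_span ⟨b :: t', htne, rfl⟩
          have e : ((a :: b :: t').map (TensorAlgebra.ι K)).prod
              = TensorAlgebra.ι K a * ((b :: t').map (TensorAlgebra.ι K)).prod := by
            simp [List.prod_cons]
          rw [val_congr h (hmulmem _ (hιmem a) _ hPt) e,
            c1 _ _ (hιmem a) hPt (hmulmem _ (hιmem a) _ hPt), c4 a (hιmem a),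
            ih htne hPt, e, hΦmul _ (hιmem a) _ hPt, hΦι]
    have main : ∀ x (hx : x ∈ augIdeal K A), φ' ⟨x, hx⟩ = Φ x := by
      intro x hx
      induction hx using Submodule.span_induction with
      | mem x hx =>
        obtain ⟨l, hl, rfl⟩ := hx
        exact keyU l hl _
      | zero =>
        have : (⟨0, Submodule.zero_mem _⟩ : ↥(augIdeal K A)) = 0 := rfl
        rw [this, map_zero, map_zero]
      | add x y hx hy ihx ihy =>
        have : (⟨x + y, add_mem hx hy⟩ : ↥(augIdeal K A)) = ⟨x, hx⟩ + ⟨y, hy⟩ := rfl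
        rw [this, map_add, ihx, ihy, map_add]
      | smul k x hx ih =>
        have : (⟨k • x, Submodule.smul_mem _ k hx⟩ : ↥(augIdeal K A)) = k • ⟨x, hx⟩ := rfl
        rw [this, map_smul, ih, map_smul]
    apply LinearMap.ext
    rintro ⟨x, hx⟩
    exact main x hx
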